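/- Let U ∈ ℝ^{m×r} and V ∈ ℝ^{n×r} have orthonormal columns, let Y ∈ ℝ^{m×n}, and suppose (I − U Uᵀ) Y V = Q R and (I − V Vᵀ) Yᵀ U = Q̂ R̂ are QR decompositions with Q ∈ ℝ^{m×r}, Q̂ ∈ ℝ^{n×r} having orthonormal columns and R, R̂ ∈ ℝ^{r×r} upper triangular. Then the tangent-space projection P(Y) = U Uᵀ Y + Y V Vᵀ − U Uᵀ Y V Vᵀ admits the factorization P(Y) = [U Q] · M · [V Q̂]ᵀ, where M is the 2r×2r block matrix with blocks M₁₁ = Uᵀ Y V, M₁₂ = R̂ᵀ, M₂₁ = R, M₂₂ = 0. -/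

import Mathlib

open Matrix

/-- factorization of the tangent-space projection
P(Y) = [U Q] · M · [V Q̂]ᵀ with M the 2r×2r block matrix
[[UᵀYV, R̂ᵀ], [R, 0]] coming from the QR decompositions of
(I−UUᵀ)YV and (I−VVᵀ)YᵀU. -/
theorem stmt6 (m n r : ℕ)
    (U Q : Matrix (Fin m) (Fin r) ℝ) (V Qh : Matrix (Fin n) (Fin r) ℝ)
    (R Rh : Matrix (Fin r) (Fin r) ℝ) (Y : Matrix (Fin m) (Fin n) ℝ)
    (hU : Uᵀ * U = 1) (hV : Vᵀ * V = 1)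
    (hQ : Qᵀ * Q = 1) (hQh : Qhᵀ * Qh = 1)
    (hUQ : Uᵀ * Q = 0) (hVQh : Vᵀ * Qh = 0)
    (hQR : (1 - U * Uᵀ) * Y * V = Q * R)
    (hQRh : (1 - V * Vᵀ) * Yᵀ * U = Qh * Rh)
    (hRtri : ∀ i j : Fin r, j < i → R i j = 0)
    (hRhtri : ∀ i j : Fin r, j < i → Rh i j = 0) :
    U * Uᵀ * Y + Y * (V * Vᵀ) - U * Uᵀ * Y * (V * Vᵀ)
      = Matrix.fromCols U Q
          * Matrix.fromBlocks (Uᵀ * Y * V) Rhᵀ R 0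
          * (Matrix.fromCols V Qh)ᵀ := by
  have h1 : Q * R * Vᵀ = Y * (V * Vᵀ) - U * Uᵀ * Y * (V * Vᵀ) := by
    rw [← hQR]; simp [Matrix.sub_mul, Matrix.mul_assoc]
  have h2 : U * Rhᵀ * Qhᵀ = U * Uᵀ * Y - U * Uᵀ * Y * (V * Vᵀ) := by
    have : Rhᵀ * Qhᵀ = (Qh * Rh)ᵀ := by rw [Matrix.transpose_mul]
    rw [Matrix.mul_assoc, this, ← hQRh]
    simp [Matrix.transpose_mul, Matrix.transpose_sub, Matrix.mul_sub, Matrix.sub_mul,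
      Matrix.mul_assoc]
  rw [Matrix.fromCols_mul_fromBlocks, Matrix.transpose_fromCols,
    Matrix.fromCols_mul_fromRows]
  rw [Matrix.mul_zero, add_zero]
  rw [Matrix.add_mul, h1, h2]
  simp only [Matrix.mul_assoc]
  abel
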